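/- For the rank-one dressing factor D_j(ζ) constructed from B_j = |z_j⟩⟨y_j| as in the dressing method, one has σ₂ D_j(ζ)^T σ₂ = ((ζ² − ζ̄_j²)/(ζ² − ζ_j²)) D_j⁻¹(ζ) for all ζ ∉ {±ζ_j, ±ζ̄_j}. -/

import Mathlib

open Matrix Filter Topology ComplexConjugate

noncomputable section

attribute [local instance] Matrix.normedAddCommGroup Matrix.normedSpace

abbrev M2 := Matrix (Fin 2) (Fin 2) ℂ

def σ3 : M2 := !![1, 0; 0, -1]

def σ2 : M2 := !![0, -Complex.I; Complex.I, 0]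

/-- A 2×2 matrix is diagonal if its off-diagonal entries vanish. -/
def IsDiag2 (A : M2) : Prop := A 0 1 = 0 ∧ A 1 0 = 0

/-- A 2×2 matrix is off-diagonal if its diagonal entries vanish. -/
def IsOffDiag2 (A : M2) : Prop := A 0 0 = 0 ∧ A 1 1 = 0

lemma s3_conj_aux (a b : Fin 2 → ℂ) :
    σ3 * Matrix.vecMulVec a b * σ3 = Matrix.vecMulVec ![a 0, -a 1] ![b 0, -b 1] := by
  ext i j
  fin_cases i <;> fin_cases j <;>
    simp [σ3, Matrix.mul_apply, Fin.sum_univ_two, Matrix.vecMulVec_apply,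
      Matrix.vecMul, dotProduct] <;> ring

lemma vmv_ct_aux (a b : Fin 2 → ℂ) :
    (Matrix.vecMulVec a b)ᴴ
      = Matrix.vecMulVec (fun i => conj (b i)) (fun j => conj (a j)) := by
  ext i j
  simp [Matrix.conjTranspose_apply, Matrix.vecMulVec_apply, mul_comm]

set_option maxHeartbeats 1000000 in
/-- `σ₂ Dⱼ(ζ)ᵀ σ₂ = ((ζ² − ζ̄ⱼ²)/(ζ² − ζⱼ²)) Dⱼ⁻¹(ζ)` away from the poles. -/
theorem stmt9
    (zj : ℂ) (hzj : zj ^ 2 ≠ (conj zj) ^ 2)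
    (y : Fin 2 → ℂ) (hy : y ≠ 0)
    (α : ℂ) (hα : α * (zj * y 0 * conj (y 0) + conj zj * y 1 * conj (y 1)) = 1)
    (z : Fin 2 → ℂ)
    (hz0 : z 0 = (zj ^ 2 - (conj zj) ^ 2) / 2 * α * conj (y 0))
    (hz1 : z 1 = (zj ^ 2 - (conj zj) ^ 2) / 2 * conj α * conj (y 1))
    (B : M2) (hB : B = Matrix.vecMulVec z y)
    (E : ℂ → M2)
    (hE : ∀ w : ℂ, E w = 1 + (w - conj zj)⁻¹ • Bᴴ - (w + conj zj)⁻¹ • (σ3 * Bᴴ * σ3))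
    (D : ℂ → M2)
    (hD : ∀ w : ℂ, D w = 1 + (w - zj)⁻¹ • B - (w + zj)⁻¹ • (σ3 * B * σ3)) :
    ∀ w : ℂ, w ≠ zj → w ≠ -zj → w ≠ conj zj → w ≠ -conj zj →
      σ2 * (D w)ᵀ * σ2 = ((w ^ 2 - (conj zj) ^ 2) / (w ^ 2 - zj ^ 2)) • E w := by
  intro w hw1 hw2 hw3 hw4
  have h1 : w - zj ≠ 0 := sub_ne_zero.mpr hw1
  have h2 : w + zj ≠ 0 := fun h => hw2 (eq_neg_of_add_eq_zero_left h)
  have h3 : w - conj zj ≠ 0 := sub_ne_zero.mpr hw3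
  have h4 : w + conj zj ≠ 0 := fun h => hw4 (eq_neg_of_add_eq_zero_left h)
  have h5 : w ^ 2 - zj ^ 2 ≠ 0 := fun h => (mul_ne_zero h1 h2) (by linear_combination h)
  have h6 : w ^ 2 - (conj zj) ^ 2 ≠ 0 :=
    fun h => (mul_ne_zero h3 h4) (by linear_combination h)
  have hα' : conj α * (conj zj * conj (y 0) * y 0 + zj * conj (y 1) * y 1) = 1 := by
    have := congrArg conj hα
    simpa [_root_.map_mul, map_add] using this
  have hI : ∀ x : ℂ, Complex.I * x * Complex.I = -x := fun x => by
    rw [mul_comm, ← mul_assoc, Complex.I_mul_I, neg_one_mul]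
  rw [hD w, hE w, hB, vmv_ct_aux, s3_conj_aux, s3_conj_aux]
  ext i j
  fin_cases i <;> fin_cases j <;>
    simp only [Matrix.mul_apply, Fin.sum_univ_two, σ2, Matrix.vecMulVec_apply,
      Matrix.one_apply, Matrix.smul_apply, Matrix.add_apply, Matrix.sub_apply,
      Matrix.transpose_apply, Matrix.vecMul, dotProduct, Matrix.of_apply,
      Pi.smul_apply, smul_eq_mul, Matrix.cons_val_zero, Matrix.cons_val_one,
      Matrix.head_cons, Matrix.cons_val', Matrix.empty_val', Matrix.cons_val_fin_one,
      Fin.isValue, hz0, hz1] <;>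
    simp [hz0, hz1, hI, Matrix.one_apply] <;>
    (try simp only [_root_.map_mul, _root_.map_sub, map_div₀, map_pow, map_ofNat,
      Complex.conj_conj]) <;>
    field_simp
  · linear_combination (2 : ℂ) * (w ^ 2 - (conj zj) ^ 2) * (w ^ 2 - zj ^ 2) *
      (zj ^ 2 - (conj zj) ^ 2) * hα'
  · ring
  · ring
  · linear_combination (2 : ℂ) * (w ^ 2 - (conj zj) ^ 2) * (w ^ 2 - zj ^ 2) *
      (zj ^ 2 - (conj zj) ^ 2) * hα
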